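/- Let $A$ be a dendriform algebra with an action of a finite group $G$ and let $(\mu^l_t, \mu^r_t)$ be an equivariant deformation of order $n$ (the dendriform identities hold modulo $t^{n+1}$). Define the obstruction 3-cochain $\mathrm{Ob} = -\sum_{p+q=n+1, p,q \geq 1} \pi_p \circ \pi_q \in C^3_G(A,A)$. Then $\mathrm{Ob}$ is a 3-cocycle in the equivariant dendriform cohomology, and the deformation extends to order $n+1$ if and only if the cohomology class of $\mathrm{Ob}$ vanishes. In particular, if $H^3_G(A,A) = 0$, every order-$n$ equivariant deformation extends to order $n+1$. -/

import Mathlib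

/-- `2`-cochain encoding of a pair of binary operations. -/
def toC2 {K A : Type*} [Field K] [AddCommGroup A] [Module K A]
    (p s : A →ₗ[K] A →ₗ[K] A) : Fin 2 → (Fin 2 → A) → A :=
  fun r a => if r = 0 then p (a 0) (a 1) else s (a 0) (a 1)

/-- Circle product `f ∘ g = f ∘₁ g - f ∘₂ g` of two dendriform 2-cochains. -/
def circ22 {B : Type*} [AddCommGroup B]
    (f g : Fin 2 → (Fin 2 → B) → B) : Fin 3 → (Fin 3 → B) → B := fun r a =>
  (if _h : (r : ℕ) ≤ 1 then
      f 0 ![g ⟨(r : ℕ), by omega⟩ ![a 0, a 1], a 2]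
    else
      f 1 ![g 0 ![a 0, a 1] + g 1 ![a 0, a 1], a 2])
  - (if _h : (r : ℕ) = 0 then
      f 0 ![a 0, g 0 ![a 1, a 2] + g 1 ![a 1, a 2]]
    else
      f 1 ![a 0, g ⟨(r : ℕ) - 1, by have := r.isLt; omega⟩ ![a 1, a 2]])

/-- The coboundary operator of the dendriform cochain complex. -/
def dcob {B : Type*} [AddCommGroup B] {n : ℕ}
    (π : Fin 2 → (Fin 2 → B) → B)
    (f : Fin n → (Fin n → B) → B) :
    Fin (n + 1) → (Fin (n + 1) → B) → B := fun r a =>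
  (if hr : (r : ℕ) = 0 then
      π 0 ![a 0, ∑ k : Fin n, f k (fun j => a j.succ)]
    else
      π 1 ![a 0, f ⟨(r : ℕ) - 1, by have := r.isLt; omega⟩ (fun j => a j.succ)])
  + (∑ i : Fin n, ((-1 : ℤ) ^ ((i : ℕ) + 1)) •
      f (if _h1 : (r : ℕ) < (i : ℕ) then ⟨(r : ℕ), by have := i.isLt; omega⟩
         else if _h2 : (r : ℕ) ≤ (i : ℕ) + 1 then ⟨(i : ℕ), i.isLt⟩
         else ⟨(r : ℕ) - 1, by have := r.isLt; omega⟩)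
        (fun j =>
          if _h3 : (j : ℕ) < (i : ℕ) then a j.castSucc
          else if _h4 : (j : ℕ) = (i : ℕ) then
            (if (r : ℕ) = (i : ℕ) then π 0 ![a i.castSucc, a i.succ]
             else if (r : ℕ) = (i : ℕ) + 1 then π 1 ![a i.castSucc, a i.succ]
             else π 0 ![a i.castSucc, a i.succ] + π 1 ![a i.castSucc, a i.succ])
          else a j.succ))
  + ((-1 : ℤ) ^ (n + 1)) •
      (if hrn : (r : ℕ) = n then
        π 1 ![∑ k : Fin n, f k (fun j => a j.castSucc), a (Fin.last n)]
      else
        π 0 ![f ⟨(r : ℕ), by have := r.isLt; omega⟩ (fun j => a j.castSucc),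
              a (Fin.last n)])

/-- Multilinearity of a dendriform cochain. -/
def IsMultilin (K : Type*) {A : Type*} [Field K] [AddCommGroup A] [Module K A]
    {n : ℕ} (f : Fin n → (Fin n → A) → A) : Prop :=
  (∀ (r : Fin n) (a : Fin n → A) (i : Fin n) (x y : A),
    f r (Function.update a i (x + y)) =
      f r (Function.update a i x) + f r (Function.update a i y)) ∧
  (∀ (r : Fin n) (a : Fin n → A) (i : Fin n) (k : K) (x : A),
    f r (Function.update a i (k • x)) = k • f r (Function.update a i x))

/-- The obstruction 3-cochain `Ob = -∑_{p+q=n+1, p,q ≥ 1} π_p ∘ π_q`. -/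
def obCochain {K A : Type*} [Field K] [AddCommGroup A] [Module K A]
    (μl μr : ℕ → (A →ₗ[K] A →ₗ[K] A)) (n : ℕ) : Fin 3 → (Fin 3 → A) → A :=
  fun r a =>
    -∑ p ∈ Finset.Icc 1 n,
      circ22 (toC2 (μl p) (μr p)) (toC2 (μl (n + 1 - p)) (μr (n + 1 - p))) r a


/-- circle product of a 2-cochain with a 3-cochain: `f ∘₁ G + f ∘₂ G`. -/
def circ23 {B : Type*} [AddCommGroup B] (f : Fin 2 → (Fin 2 → B) → B)
    (G : Fin 3 → (Fin 3 → B) → B) : Fin 4 → (Fin 4 → B) → B := fun r a =>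
  (if _h : (r : ℕ) ≤ 2 then f 0 ![G ⟨(r:ℕ), by omega⟩ ![a 0, a 1, a 2], a 3]
   else f 1 ![∑ k : Fin 3, G k ![a 0, a 1, a 2], a 3])
  + (if _h : (r : ℕ) = 0 then f 0 ![a 0, ∑ k : Fin 3, G k ![a 1, a 2, a 3]]
     else f 1 ![a 0, G ⟨(r:ℕ)-1, by have := r.isLt; omega⟩ ![a 1, a 2, a 3]])

/-- circle product of a 3-cochain with a 2-cochain: `G ∘₁ g - G ∘₂ g + G ∘₃ g`. -/
def circ32 {B : Type*} [AddCommGroup B] (G : Fin 3 → (Fin 3 → B) → B)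
    (g : Fin 2 → (Fin 2 → B) → B) : Fin 4 → (Fin 4 → B) → B := fun r a =>
  (if _h : (r : ℕ) ≤ 1 then G 0 ![g ⟨(r:ℕ), by omega⟩ ![a 0, a 1], a 2, a 3]
   else G ⟨(r:ℕ)-1, by have := r.isLt; omega⟩
          ![g 0 ![a 0, a 1] + g 1 ![a 0, a 1], a 2, a 3])
  - (if _h : (r : ℕ) = 0 then G 0 ![a 0, g 0 ![a 1, a 2] + g 1 ![a 1, a 2], a 3]
     else if _h2 : (r : ℕ) ≤ 2 then G 1 ![a 0, g ⟨(r:ℕ)-1, by omega⟩ ![a 1, a 2], a 3]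
     else G 2 ![a 0, g 0 ![a 1, a 2] + g 1 ![a 1, a 2], a 3])
  + (if _h : (r : ℕ) ≤ 1 then
       G ⟨(r:ℕ), by have := r.isLt; omega⟩ ![a 0, a 1, g 0 ![a 2, a 3] + g 1 ![a 2, a 3]]
     else G 2 ![a 0, a 1, g ⟨(r:ℕ)-2, by have := r.isLt; omega⟩ ![a 2, a 3]])


section
variable {K A : Type*} [Field K] [AddCommGroup A] [Module K A]
variable {B : Type*} [AddCommGroup B]

set_option maxHeartbeats 1000000 in
theorem my_asym (fl fr gl gr hl hr : A →ₗ[K] A →ₗ[K] A) (r : Fin 4) (a : Fin 4 → A) :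
    circ32 (circ22 (toC2 fl fr) (toC2 gl gr)) (toC2 hl hr) r a
    + circ32 (circ22 (toC2 fl fr) (toC2 hl hr)) (toC2 gl gr) r a
    = circ23 (toC2 fl fr) (circ22 (toC2 gl gr) (toC2 hl hr)) r a
    + circ23 (toC2 fl fr) (circ22 (toC2 hl hr) (toC2 gl gr)) r a := by
  fin_cases r <;>
    simp [circ32, circ23, circ22, toC2, Fin.sum_univ_three, map_add, map_sub,
      LinearMap.add_apply, LinearMap.sub_apply] <;>
    abel

set_option maxHeartbeats 1000000 in
theorem my_adiag (fl fr gl gr : A →ₗ[K] A →ₗ[K] A) (r : Fin 4) (a : Fin 4 → A) :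
    circ32 (circ22 (toC2 fl fr) (toC2 gl gr)) (toC2 gl gr) r a
    = circ23 (toC2 fl fr) (circ22 (toC2 gl gr) (toC2 gl gr)) r a := by
  fin_cases r <;>
    simp [circ32, circ23, circ22, toC2, Fin.sum_univ_three, map_add, map_sub,
      LinearMap.add_apply, LinearMap.sub_apply] <;>
    abel

set_option maxHeartbeats 1000000 in
theorem d2_eq (l0 r0 l1 r1 : A →ₗ[K] A →ₗ[K] A) (r : Fin 3) (a : Fin 3 → A) :
    dcob (toC2 l0 r0) (toC2 l1 r1) r a
    = -(circ22 (toC2 l0 r0) (toC2 l1 r1) r a + circ22 (toC2 l1 r1) (toC2 l0 r0) r a) := by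
  fin_cases r <;>
  · simp only [dcob, Fin.sum_univ_two, Fin.isValue]
    norm_num
    simp [circ22, toC2, map_add, map_sub, LinearMap.add_apply, LinearMap.sub_apply,
      show Fin.last 2 = (2:Fin 3) from rfl]
    abel
end

section
variable {K A : Type*} [Field K] [AddCommGroup A] [Module K A]
set_option maxHeartbeats 4000000 in
theorem d3_eq (l0 r0 l1 r1 l2 r2 : A →ₗ[K] A →ₗ[K] A) (r : Fin 4) (a : Fin 4 → A) :
    dcob (toC2 l0 r0) (circ22 (toC2 l1 r1) (toC2 l2 r2)) r a
    = circ23 (toC2 l0 r0) (circ22 (toC2 l1 r1) (toC2 l2 r2)) r a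
      - circ32 (circ22 (toC2 l1 r1) (toC2 l2 r2)) (toC2 l0 r0) r a := by
  fin_cases r <;>
  · simp only [dcob, circ32, circ23, circ22, toC2, Fin.sum_univ_three, Fin.isValue]
    norm_num [show (Fin.succ 2 : Fin 4) = 3 from rfl,
      show (Fin.succ 1 : Fin 4) = 2 from rfl, show (Fin.succ 0 : Fin 4) = 1 from rfl,
      show (Fin.castSucc 2 : Fin 4) = 2 from rfl, show (Fin.castSucc 1 : Fin 4) = 1 from rfl,
      show (Fin.castSucc 0 : Fin 4) = 0 from rfl,
      show Fin.last 3 = (3:Fin 4) from rfl, Matrix.cons_val_two, Matrix.tail_cons,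
      Matrix.head_cons]
    abel
end

section
variable {K A : Type*} [Field K] [AddCommGroup A] [Module K A]
variable {B : Type*} [AddCommGroup B]

theorem circ32_congr {F F' : Fin 3 → (Fin 3 → B) → B} (g : Fin 2 → (Fin 2 → B) → B)
    (h : ∀ x b, F x b = F' x b) (r : Fin 4) (a : Fin 4 → B) :
    circ32 F g r a = circ32 F' g r a := by
  simp only [circ32, h]

theorem circ23_congr (f : Fin 2 → (Fin 2 → B) → B) {G G' : Fin 3 → (Fin 3 → B) → B}
    (h : ∀ x b, G x b = G' x b) (r : Fin 4) (a : Fin 4 → B) :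
    circ23 f G r a = circ23 f G' r a := by
  simp only [circ23, h]

theorem circ32_addF (F F' : Fin 3 → (Fin 3 → B) → B) (g : Fin 2 → (Fin 2 → B) → B)
    (r : Fin 4) (a : Fin 4 → B) :
    circ32 (fun x b => F x b + F' x b) g r a = circ32 F g r a + circ32 F' g r a := by
  simp only [circ32]; split_ifs <;> abel

theorem circ32_negsum (s : Finset ℕ) (F : ℕ → Fin 3 → (Fin 3 → B) → B)
    (g : Fin 2 → (Fin 2 → B) → B) (r : Fin 4) (a : Fin 4 → B) :
    circ32 (fun x b => -∑ p ∈ s, F p x b) g r a = -∑ p ∈ s, circ32 (F p) g r a := by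
  simp only [circ32]
  split_ifs <;>
  · simp only [← Finset.sum_neg_distrib, ← Finset.sum_sub_distrib, ← Finset.sum_add_distrib]
    exact Finset.sum_congr rfl fun p _ => by abel

theorem circ23_addG (L R : A →ₗ[K] A →ₗ[K] A) (G G' : Fin 3 → (Fin 3 → A) → A)
    (r : Fin 4) (a : Fin 4 → A) :
    circ23 (toC2 L R) (fun x b => G x b + G' x b) r a
      = circ23 (toC2 L R) G r a + circ23 (toC2 L R) G' r a := by
  simp only [circ23, toC2]
  split_ifs <;>
    simp [Fin.sum_univ_three, map_add, LinearMap.add_apply, Finset.sum_add_distrib] <;> abel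

theorem circ23_negsum (L R : A →ₗ[K] A →ₗ[K] A) (s : Finset ℕ)
    (G : ℕ → Fin 3 → (Fin 3 → A) → A) (r : Fin 4) (a : Fin 4 → A) :
    circ23 (toC2 L R) (fun x b => -∑ p ∈ s, G p x b) r a
      = -∑ p ∈ s, circ23 (toC2 L R) (G p) r a := by
  simp only [circ23, toC2]
  split_ifs <;>
  · simp only [Matrix.cons_val_zero, Matrix.cons_val_one, Matrix.head_cons,
      Fin.sum_univ_three, map_neg, map_sum, LinearMap.neg_apply, LinearMap.sum_apply,
      map_add, LinearMap.add_apply, ← Finset.sum_neg_distrib, ← Finset.sum_sub_distrib,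
      ← Finset.sum_add_distrib]
    exact Finset.sum_congr rfl fun p _ => by abel

set_option maxHeartbeats 1000000 in
theorem dcob_negsum (L R : A →ₗ[K] A →ₗ[K] A) (s : Finset ℕ)
    (F : ℕ → Fin 3 → (Fin 3 → A) → A) (r : Fin 4) (a : Fin 4 → A) :
    dcob (toC2 L R) (fun x b => -∑ p ∈ s, F p x b) r a
      = -∑ p ∈ s, dcob (toC2 L R) (F p) r a := by
  fin_cases r <;>
  · simp only [dcob, toC2, Fin.sum_univ_three, Fin.isValue]
    norm_num
    simp only [← Finset.sum_neg_distrib, ← Finset.sum_sub_distrib, ← Finset.sum_add_distrib]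
    exact Finset.sum_congr rfl fun p _ => by abel
end

section
variable {K A : Type*} [Field K] [AddCommGroup A] [Module K A]
variable {B : Type*} [AddCommGroup B]

theorem c22_negf (L' R' : A →ₗ[K] A →ₗ[K] A) (g : Fin 2 → (Fin 2 → A) → A)
    (r : Fin 3) (a : Fin 3 → A) :
    circ22 (toC2 (-L') (-R')) g r a = -circ22 (toC2 L' R') g r a := by
  fin_cases r <;>
    simp [circ22, toC2, LinearMap.neg_apply] <;> abel

theorem c22_negg (L R L' R' : A →ₗ[K] A →ₗ[K] A) (r : Fin 3) (a : Fin 3 → A) :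
    circ22 (toC2 L R) (toC2 (-L') (-R')) r a = -circ22 (toC2 L R) (toC2 L' R') r a := by
  fin_cases r <;>
    simp [circ22, toC2, LinearMap.neg_apply, map_neg, map_add] <;> abel

theorem c22_update_add (fl fr gl gr : A →ₗ[K] A →ₗ[K] A) (r : Fin 3) (a : Fin 3 → A)
    (i : Fin 3) (x y : A) :
    circ22 (toC2 fl fr) (toC2 gl gr) r (Function.update a i (x + y))
      = circ22 (toC2 fl fr) (toC2 gl gr) r (Function.update a i x)
        + circ22 (toC2 fl fr) (toC2 gl gr) r (Function.update a i y) := by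
  fin_cases r <;> fin_cases i <;>
    simp [circ22, toC2, Function.update_apply, map_add, LinearMap.add_apply] <;> abel

theorem c22_update_smul (fl fr gl gr : A →ₗ[K] A →ₗ[K] A) (r : Fin 3) (a : Fin 3 → A)
    (i : Fin 3) (k : K) (x : A) :
    circ22 (toC2 fl fr) (toC2 gl gr) r (Function.update a i (k • x))
      = k • circ22 (toC2 fl fr) (toC2 gl gr) r (Function.update a i x) := by
  fin_cases r <;> fin_cases i <;>
    simp [circ22, toC2, Function.update_apply, map_smul, LinearMap.smul_apply,
      smul_add, smul_sub]

theorem range_split (m : ℕ) (hm : 1 ≤ m) (f : ℕ → B) :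
    ∑ i ∈ Finset.range (m + 1), f i = f 0 + f m + ∑ i ∈ Finset.Icc 1 (m - 1), f i := by
  have h : Finset.range (m + 1) = insert 0 (insert m (Finset.Icc 1 (m - 1))) := by
    ext x; simp [Finset.mem_range, Finset.mem_Icc, Finset.mem_insert]; omega
  rw [h, Finset.sum_insert (by simp [Finset.mem_Icc]; omega),
    Finset.sum_insert (by simp [Finset.mem_Icc]; omega)]
  abel
end

section
variable {K A : Type*} [Field K] [AddCommGroup A] [Module K A]
variable {B : Type*} [AddCommGroup B]

theorem range_split2 (n : ℕ) (f : ℕ → B) :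
    ∑ i ∈ Finset.range (n + 2), f i = f 0 + f (n + 1) + ∑ i ∈ Finset.Icc 1 n, f i := by
  have h := range_split (n + 1) (by omega) f
  simpa using h
end

section
variable {K A : Type*} [Field K] [AddCommGroup A] [Module K A]

set_option maxHeartbeats 1000000 in
theorem ob_is_cocycle (μl μr : ℕ → (A →ₗ[K] A →ₗ[K] A)) (n : ℕ)
    (hdef : ∀ m ≤ n, ∀ (r : Fin 3) (a : Fin 3 → A),
      ∑ i ∈ Finset.range (m + 1),
        circ22 (toC2 (μl i) (μr i)) (toC2 (μl (m - i)) (μr (m - i))) r a = 0)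
    (r : Fin 4) (a : Fin 4 → A) :
    dcob (toC2 (μl 0) (μr 0)) (obCochain μl μr n) r a = 0 := by
  classical
  have e1 : dcob (toC2 (μl 0) (μr 0)) (obCochain μl μr n) r a
      = -∑ p ∈ Finset.Icc 1 n, dcob (toC2 (μl 0) (μr 0))
          (circ22 (toC2 (μl p) (μr p)) (toC2 (μl (n+1-p)) (μr (n+1-p)))) r a :=
    dcob_negsum (μl 0) (μr 0) (Finset.Icc 1 n)
      (fun p => circ22 (toC2 (μl p) (μr p)) (toC2 (μl (n+1-p)) (μr (n+1-p)))) r a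
  rw [e1, neg_eq_zero]
  -- pointwise consequence of the deformation equations
  have hcor : ∀ p, 1 ≤ p → p ≤ n → ∀ (x : Fin 3) (b : Fin 3 → A),
      circ22 (toC2 (μl 0) (μr 0)) (toC2 (μl p) (μr p)) x b
      + circ22 (toC2 (μl p) (μr p)) (toC2 (μl 0) (μr 0)) x b
      = -∑ i ∈ Finset.Icc 1 (p - 1),
          circ22 (toC2 (μl i) (μr i)) (toC2 (μl (p - i)) (μr (p - i))) x b := by
    intro p h1p hpn x b
    have h0 := hdef p hpn x b
    rw [range_split p h1p] at h0
    simp only [Nat.sub_zero, Nat.sub_self] at h0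
    exact eq_neg_of_add_eq_zero_left h0
  have key : ∀ p ∈ Finset.Icc 1 n,
      dcob (toC2 (μl 0) (μr 0))
        (circ22 (toC2 (μl p) (μr p)) (toC2 (μl (n+1-p)) (μr (n+1-p)))) r a
      = (-∑ i ∈ Finset.Icc 1 (p-1),
           circ32 (circ22 (toC2 (μl i) (μr i)) (toC2 (μl (p-i)) (μr (p-i))))
             (toC2 (μl (n+1-p)) (μr (n+1-p))) r a)
        + (∑ i ∈ Finset.Icc 1 (n+1-p-1),
           circ23 (toC2 (μl p) (μr p))
             (circ22 (toC2 (μl i) (μr i)) (toC2 (μl (n+1-p-i)) (μr (n+1-p-i)))) r a)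
        - (circ32 (circ22 (toC2 (μl 0) (μr 0)) (toC2 (μl p) (μr p)))
             (toC2 (μl (n+1-p)) (μr (n+1-p))) r a
           - circ23 (toC2 (μl 0) (μr 0))
             (circ22 (toC2 (μl p) (μr p)) (toC2 (μl (n+1-p)) (μr (n+1-p)))) r a) := by
    intro p hp
    simp only [Finset.mem_Icc] at hp
    obtain ⟨h1p, hpn⟩ := hp
    have hq1 : 1 ≤ n + 1 - p := by omega
    have hqn : n + 1 - p ≤ n := by omega
    have A1 := my_asym (μl p) (μr p) (μl 0) (μr 0) (μl (n+1-p)) (μr (n+1-p)) r a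
    have B1 : circ32 (circ22 (toC2 (μl 0) (μr 0)) (toC2 (μl p) (μr p)))
          (toC2 (μl (n+1-p)) (μr (n+1-p))) r a
        + circ32 (circ22 (toC2 (μl p) (μr p)) (toC2 (μl 0) (μr 0)))
          (toC2 (μl (n+1-p)) (μr (n+1-p))) r a
        = -∑ i ∈ Finset.Icc 1 (p-1),
            circ32 (circ22 (toC2 (μl i) (μr i)) (toC2 (μl (p-i)) (μr (p-i))))
              (toC2 (μl (n+1-p)) (μr (n+1-p))) r a := by
      calc circ32 (circ22 (toC2 (μl 0) (μr 0)) (toC2 (μl p) (μr p)))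
              (toC2 (μl (n+1-p)) (μr (n+1-p))) r a
            + circ32 (circ22 (toC2 (μl p) (μr p)) (toC2 (μl 0) (μr 0)))
              (toC2 (μl (n+1-p)) (μr (n+1-p))) r a
          = circ32 (fun x b => circ22 (toC2 (μl 0) (μr 0)) (toC2 (μl p) (μr p)) x b
              + circ22 (toC2 (μl p) (μr p)) (toC2 (μl 0) (μr 0)) x b)
              (toC2 (μl (n+1-p)) (μr (n+1-p))) r a := (circ32_addF _ _ _ r a).symm
        _ = circ32 (fun x b => -∑ i ∈ Finset.Icc 1 (p-1),
              circ22 (toC2 (μl i) (μr i)) (toC2 (μl (p-i)) (μr (p-i))) x b)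
              (toC2 (μl (n+1-p)) (μr (n+1-p))) r a :=
            circ32_congr _ (fun x b => hcor p h1p hpn x b) r a
        _ = _ := circ32_negsum _ _ _ r a
    have B2 : circ23 (toC2 (μl p) (μr p))
          (circ22 (toC2 (μl 0) (μr 0)) (toC2 (μl (n+1-p)) (μr (n+1-p)))) r a
        + circ23 (toC2 (μl p) (μr p))
          (circ22 (toC2 (μl (n+1-p)) (μr (n+1-p))) (toC2 (μl 0) (μr 0))) r a
        = -∑ i ∈ Finset.Icc 1 (n+1-p-1),
            circ23 (toC2 (μl p) (μr p))
              (circ22 (toC2 (μl i) (μr i)) (toC2 (μl (n+1-p-i)) (μr (n+1-p-i)))) r a := by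
      calc circ23 (toC2 (μl p) (μr p))
              (circ22 (toC2 (μl 0) (μr 0)) (toC2 (μl (n+1-p)) (μr (n+1-p)))) r a
            + circ23 (toC2 (μl p) (μr p))
              (circ22 (toC2 (μl (n+1-p)) (μr (n+1-p))) (toC2 (μl 0) (μr 0))) r a
          = circ23 (toC2 (μl p) (μr p)) (fun x b =>
              circ22 (toC2 (μl 0) (μr 0)) (toC2 (μl (n+1-p)) (μr (n+1-p))) x b
              + circ22 (toC2 (μl (n+1-p)) (μr (n+1-p))) (toC2 (μl 0) (μr 0)) x b) r a :=
            (circ23_addG _ _ _ _ r a).symm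
        _ = circ23 (toC2 (μl p) (μr p)) (fun x b => -∑ i ∈ Finset.Icc 1 (n+1-p-1),
              circ22 (toC2 (μl i) (μr i)) (toC2 (μl (n+1-p-i)) (μr (n+1-p-i))) x b) r a :=
            circ23_congr _ (fun x b => hcor (n+1-p) hq1 hqn x b) r a
        _ = _ := circ23_negsum _ _ _ _ r a
    rw [B2] at A1
    have A1' := eq_sub_of_add_eq' A1
    have B1' := eq_sub_of_add_eq' B1
    rw [d3_eq, A1', B1']
    abel
  rw [Finset.sum_congr rfl key]
  simp only [Finset.sum_sub_distrib, Finset.sum_add_distrib, Finset.sum_neg_distrib]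
  have hSA : ∑ p ∈ Finset.Icc 1 n,
      (circ32 (circ22 (toC2 (μl 0) (μr 0)) (toC2 (μl p) (μr p)))
         (toC2 (μl (n+1-p)) (μr (n+1-p))) r a
       - circ23 (toC2 (μl 0) (μr 0))
         (circ22 (toC2 (μl p) (μr p)) (toC2 (μl (n+1-p)) (μr (n+1-p)))) r a) = 0 := by
    apply Finset.sum_involution (fun p _ => n + 1 - p)
    · intro p hp
      simp only [Finset.mem_Icc] at hp
      have hback : n + 1 - (n + 1 - p) = p := by omega
      rw [hback, sub_add_sub_comm, sub_eq_zero]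
      exact my_asym (μl 0) (μr 0) (μl p) (μr p) (μl (n+1-p)) (μr (n+1-p)) r a
    · intro p hp hf heq
      apply hf
      rw [heq, sub_eq_zero]
      exact my_adiag (μl 0) (μr 0) (μl p) (μr p) r a
    · intro p hp
      simp only [Finset.mem_Icc] at hp ⊢
      omega
    · intro p hp
      simp only [Finset.mem_Icc] at hp
      omega
  have hT1 : ∑ p ∈ Finset.Icc 1 n, ∑ i ∈ Finset.Icc 1 (p-1),
        circ32 (circ22 (toC2 (μl i) (μr i)) (toC2 (μl (p-i)) (μr (p-i))))
          (toC2 (μl (n+1-p)) (μr (n+1-p))) r a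
      = ∑ x ∈ (Finset.Icc 1 n ×ˢ Finset.Icc 1 n).filter (fun x => x.1 + x.2 ≤ n),
          circ32 (circ22 (toC2 (μl x.1) (μr x.1)) (toC2 (μl x.2) (μr x.2)))
            (toC2 (μl (n+1-x.1-x.2)) (μr (n+1-x.1-x.2))) r a := by
    rw [Finset.sum_sigma' (Finset.Icc 1 n) (fun p => Finset.Icc 1 (p-1))]
    refine Finset.sum_bij' (fun x _ => (x.2, x.1 - x.2)) (fun y _ => ⟨y.1 + y.2, y.1⟩)
      ?_ ?_ ?_ ?_ ?_
    · intro x hx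
      simp only [Finset.mem_sigma, Finset.mem_Icc] at hx
      simp only [Finset.mem_filter, Finset.mem_product, Finset.mem_Icc]
      omega
    · intro y hy
      simp only [Finset.mem_filter, Finset.mem_product, Finset.mem_Icc] at hy
      simp only [Finset.mem_sigma, Finset.mem_Icc]
      omega
    · intro x hx
      simp only [Finset.mem_sigma, Finset.mem_Icc] at hx
      ext <;> simp <;> omega
    · intro y hy
      simp only [Finset.mem_filter, Finset.mem_product, Finset.mem_Icc] at hy
      simp only [Nat.add_sub_cancel_left]
    · intro x hx
      simp only [Finset.mem_sigma, Finset.mem_Icc] at hx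
      have h1 : n + 1 - x.2 - (x.1 - x.2) = n + 1 - x.1 := by omega
      rw [h1]
  have hT2 : ∑ p ∈ Finset.Icc 1 n, ∑ i ∈ Finset.Icc 1 (n+1-p-1),
        circ23 (toC2 (μl p) (μr p))
          (circ22 (toC2 (μl i) (μr i)) (toC2 (μl (n+1-p-i)) (μr (n+1-p-i)))) r a
      = ∑ x ∈ (Finset.Icc 1 n ×ˢ Finset.Icc 1 n).filter (fun x => x.1 + x.2 ≤ n),
          circ23 (toC2 (μl x.1) (μr x.1))
            (circ22 (toC2 (μl x.2) (μr x.2))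
              (toC2 (μl (n+1-x.1-x.2)) (μr (n+1-x.1-x.2)))) r a := by
    rw [Finset.sum_sigma' (Finset.Icc 1 n) (fun p => Finset.Icc 1 (n+1-p-1))]
    refine Finset.sum_bij' (fun x _ => (x.1, x.2)) (fun y _ => ⟨y.1, y.2⟩)
      ?_ ?_ ?_ ?_ ?_
    · intro x hx
      simp only [Finset.mem_sigma, Finset.mem_Icc] at hx
      simp only [Finset.mem_filter, Finset.mem_product, Finset.mem_Icc]
      omega
    · intro y hy
      simp only [Finset.mem_filter, Finset.mem_product, Finset.mem_Icc] at hy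
      simp only [Finset.mem_sigma, Finset.mem_Icc]
      omega
    · intro x hx; rfl
    · intro y hy; rfl
    · intro x hx; rfl
  rw [hT1, hT2]
  have hdiff : ∑ x ∈ (Finset.Icc 1 n ×ˢ Finset.Icc 1 n).filter (fun x => x.1 + x.2 ≤ n),
      (circ23 (toC2 (μl x.1) (μr x.1))
         (circ22 (toC2 (μl x.2) (μr x.2)) (toC2 (μl (n+1-x.1-x.2)) (μr (n+1-x.1-x.2)))) r a
       - circ32 (circ22 (toC2 (μl x.1) (μr x.1)) (toC2 (μl x.2) (μr x.2)))
         (toC2 (μl (n+1-x.1-x.2)) (μr (n+1-x.1-x.2))) r a) = 0 := by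
    apply Finset.sum_involution (fun x _ => (x.1, n + 1 - x.1 - x.2))
    · intro x hx
      simp only [Finset.mem_filter, Finset.mem_product, Finset.mem_Icc] at hx
      have hback : n + 1 - x.1 - (n + 1 - x.1 - x.2) = x.2 := by omega
      rw [hback, sub_add_sub_comm, sub_eq_zero]
      exact (my_asym (μl x.1) (μr x.1) (μl x.2) (μr x.2)
        (μl (n+1-x.1-x.2)) (μr (n+1-x.1-x.2)) r a).symm
    · intro x hx hf heq
      apply hf
      have h2 : n + 1 - x.1 - x.2 = x.2 := by
        have := congrArg Prod.snd heq
        simpa using this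
      rw [h2, sub_eq_zero]
      exact (my_adiag (μl x.1) (μr x.1) (μl x.2) (μr x.2) r a).symm
    · intro x hx
      simp only [Finset.mem_filter, Finset.mem_product, Finset.mem_Icc] at hx ⊢
      omega
    · intro x hx
      simp only [Finset.mem_filter, Finset.mem_product, Finset.mem_Icc] at hx
      ext <;> simp <;> omega
  rw [Finset.sum_sub_distrib, sub_eq_zero] at hSA
  rw [Finset.sum_sub_distrib, sub_eq_zero] at hdiff
  rw [hSA, hdiff]
  abel
end


/-- For an order-`n` equivariant deformation of a dendriform algebra with a
finite group action, the obstruction `Ob = -∑_{p+q=n+1,p,q≥1} π_p ∘ π_q` is an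
equivariant 3-cocycle; the deformation extends to order `n+1` iff the class of
`Ob` vanishes; in particular, if `H³_G(A,A) = 0` then it extends. -/
theorem obstruction_is_cocycle_and_extension {K A G : Type*} [Field K]
    [AddCommGroup A] [Module K A] [Group G] [Finite G]
    (pr sc : A →ₗ[K] A →ₗ[K] A)
    (h1 : ∀ a b c : A, pr (pr a b) c = pr a (pr b c + sc b c))
    (h2 : ∀ a b c : A, pr (sc a b) c = sc a (pr b c))
    (h3 : ∀ a b c : A, sc (pr a b + sc a b) c = sc a (sc b c))
    (ρ : G →* Module.End K A)
    (hpr : ∀ (g : G) (a b : A), ρ g (pr a b) = pr (ρ g a) (ρ g b))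
    (hsc : ∀ (g : G) (a b : A), ρ g (sc a b) = sc (ρ g a) (ρ g b))
    -- the order-`n` equivariant deformation
    (n : ℕ)
    (μl μr : ℕ → (A →ₗ[K] A →ₗ[K] A))
    (hl0 : μl 0 = pr) (hr0 : μr 0 = sc)
    (hequiv : ∀ (i : ℕ) (g : G) (a b : A),
      ρ g (μl i a b) = μl i (ρ g a) (ρ g b) ∧ ρ g (μr i a b) = μr i (ρ g a) (ρ g b))
    (hdef : ∀ m ≤ n, ∀ (r : Fin 3) (a : Fin 3 → A),
      ∑ i ∈ Finset.range (m + 1),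
        circ22 (toC2 (μl i) (μr i)) (toC2 (μl (m - i)) (μr (m - i))) r a = 0) :
    -- (1) the obstruction is a 3-cocycle
    (∀ (r : Fin 4) (a : Fin 4 → A),
      dcob (toC2 pr sc) (obCochain μl μr n) r a = 0) ∧
    -- (2) the deformation extends to order `n+1` iff the class of `Ob` vanishes
    ((∃ l' r' : A →ₗ[K] A →ₗ[K] A,
        (∀ (g : G) (a b : A), ρ g (l' a b) = l' (ρ g a) (ρ g b)) ∧
        (∀ (g : G) (a b : A), ρ g (r' a b) = r' (ρ g a) (ρ g b)) ∧
        (∀ (r : Fin 3) (a : Fin 3 → A),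
          ∑ i ∈ Finset.range (n + 2),
            circ22
              (toC2 (if i = n + 1 then l' else μl i) (if i = n + 1 then r' else μr i))
              (toC2 (if n + 1 - i = n + 1 then l' else μl (n + 1 - i))
                    (if n + 1 - i = n + 1 then r' else μr (n + 1 - i))) r a = 0)) ↔
      (∃ cl cr : A →ₗ[K] A →ₗ[K] A,
        (∀ (g : G) (a b : A), ρ g (cl a b) = cl (ρ g a) (ρ g b)) ∧
        (∀ (g : G) (a b : A), ρ g (cr a b) = cr (ρ g a) (ρ g b)) ∧
        (∀ (r : Fin 3) (a : Fin 3 → A),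
          dcob (toC2 pr sc) (toC2 cl cr) r a = obCochain μl μr n r a))) ∧
    -- (3) if `H³_G(A,A) = 0`, the deformation extends to order `n+1`
    ((∀ c : Fin 3 → (Fin 3 → A) → A, IsMultilin K c →
        (∀ (g : G) (r : Fin 3) (a : Fin 3 → A),
          c r (fun i => ρ g (a i)) = ρ g (c r a)) →
        (∀ (r : Fin 4) (a : Fin 4 → A), dcob (toC2 pr sc) c r a = 0) →
        ∃ hl hr : A →ₗ[K] A →ₗ[K] A,
          (∀ (g : G) (a b : A), ρ g (hl a b) = hl (ρ g a) (ρ g b)) ∧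
          (∀ (g : G) (a b : A), ρ g (hr a b) = hr (ρ g a) (ρ g b)) ∧
          (∀ (r : Fin 3) (a : Fin 3 → A),
            dcob (toC2 pr sc) (toC2 hl hr) r a = c r a)) →
      ∃ l' r' : A →ₗ[K] A →ₗ[K] A,
        (∀ (g : G) (a b : A), ρ g (l' a b) = l' (ρ g a) (ρ g b)) ∧
        (∀ (g : G) (a b : A), ρ g (r' a b) = r' (ρ g a) (ρ g b)) ∧
        (∀ (r : Fin 3) (a : Fin 3 → A),
          ∑ i ∈ Finset.range (n + 2),
            circ22
              (toC2 (if i = n + 1 then l' else μl i) (if i = n + 1 then r' else μr i))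
              (toC2 (if n + 1 - i = n + 1 then l' else μl (n + 1 - i))
                    (if n + 1 - i = n + 1 then r' else μr (n + 1 - i))) r a = 0)) := by
  classical
  subst hl0
  subst hr0
  have hLe : ∀ (i : ℕ) (g : G) (x y : A), ρ g (μl i x y) = μl i (ρ g x) (ρ g y) :=
    fun i g x y => (hequiv i g x y).1
  have hRe : ∀ (i : ℕ) (g : G) (x y : A), ρ g (μr i x y) = μr i (ρ g x) (ρ g y) :=
    fun i g x y => (hequiv i g x y).2
  -- splitting the order-(n+1) deformation sum
  have split : ∀ (L R : A →ₗ[K] A →ₗ[K] A) (r : Fin 3) (a : Fin 3 → A),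
      ∑ i ∈ Finset.range (n + 2),
        circ22 (toC2 (if i = n + 1 then L else μl i) (if i = n + 1 then R else μr i))
          (toC2 (if n + 1 - i = n + 1 then L else μl (n + 1 - i))
                (if n + 1 - i = n + 1 then R else μr (n + 1 - i))) r a
      = circ22 (toC2 (μl 0) (μr 0)) (toC2 L R) r a
        + circ22 (toC2 L R) (toC2 (μl 0) (μr 0)) r a
        + ∑ p ∈ Finset.Icc 1 n,
            circ22 (toC2 (μl p) (μr p)) (toC2 (μl (n+1-p)) (μr (n+1-p))) r a := by
    intro L R r a
    rw [range_split2]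
    have c1 : ¬((0:ℕ) = n + 1) := by omega
    simp only [Nat.sub_zero, Nat.sub_self, if_neg c1, eq_self_iff_true, if_true]
    congr 1
    refine Finset.sum_congr rfl fun i hi => ?_
    simp only [Finset.mem_Icc] at hi
    have hni : ¬(i = n + 1) := by omega
    have hnq : ¬(n + 1 - i = n + 1) := by omega
    rw [if_neg hni, if_neg hni, if_neg hnq, if_neg hnq]
  -- the extension condition in terms of the coboundary
  have ext_iff : ∀ (L R : A →ₗ[K] A →ₗ[K] A),
      (∀ (r : Fin 3) (a : Fin 3 → A),
        ∑ i ∈ Finset.range (n + 2),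
          circ22 (toC2 (if i = n + 1 then L else μl i) (if i = n + 1 then R else μr i))
            (toC2 (if n + 1 - i = n + 1 then L else μl (n + 1 - i))
                  (if n + 1 - i = n + 1 then R else μr (n + 1 - i))) r a = 0)
      ↔ (∀ (r : Fin 3) (a : Fin 3 → A),
          dcob (toC2 (μl 0) (μr 0)) (toC2 (-L) (-R)) r a = obCochain μl μr n r a) := by
    intro L R
    have point : ∀ (r : Fin 3) (a : Fin 3 → A),
        dcob (toC2 (μl 0) (μr 0)) (toC2 (-L) (-R)) r a
        = circ22 (toC2 (μl 0) (μr 0)) (toC2 L R) r a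
          + circ22 (toC2 L R) (toC2 (μl 0) (μr 0)) r a := by
      intro r a
      rw [d2_eq, c22_negg, c22_negf]
      abel
    constructor
    · intro h r a
      have hs := h r a
      rw [split L R r a] at hs
      rw [point r a]
      simp only [obCochain]
      exact eq_neg_of_add_eq_zero_left hs
    · intro h r a
      rw [split L R r a]
      have hp := h r a
      rw [point r a] at hp
      simp only [obCochain] at hp
      rw [hp]
      exact neg_add_cancel _
  refine ⟨fun r a => ob_is_cocycle μl μr n hdef r a, ?_, ?_⟩
  · -- part (2)
    constructor
    · rintro ⟨l', r', hle, hre, hsum⟩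
      refine ⟨-l', -r', ?_, ?_, (ext_iff l' r').mp hsum⟩
      · intro g x y
        simp [LinearMap.neg_apply, map_neg, hle g x y]
      · intro g x y
        simp [LinearMap.neg_apply, map_neg, hre g x y]
    · rintro ⟨cl, cr, hle, hre, hd⟩
      refine ⟨-cl, -cr, ?_, ?_, (ext_iff (-cl) (-cr)).mpr ?_⟩
      · intro g x y
        simp [LinearMap.neg_apply, map_neg, hle g x y]
      · intro g x y
        simp [LinearMap.neg_apply, map_neg, hre g x y]
      · intro r a
        rw [neg_neg, neg_neg]
        exact hd r a
  · -- part (3)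
    intro H
    have hmult : IsMultilin K (obCochain μl μr n) := by
      constructor
      · intro r a i x y
        simp only [obCochain]
        rw [show (∑ p ∈ Finset.Icc 1 n,
              circ22 (toC2 (μl p) (μr p)) (toC2 (μl (n + 1 - p)) (μr (n + 1 - p))) r
                (Function.update a i (x + y)))
            = ∑ p ∈ Finset.Icc 1 n,
              (circ22 (toC2 (μl p) (μr p)) (toC2 (μl (n + 1 - p)) (μr (n + 1 - p))) r
                (Function.update a i x)
              + circ22 (toC2 (μl p) (μr p)) (toC2 (μl (n + 1 - p)) (μr (n + 1 - p))) r
                (Function.update a i y)) from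
          Finset.sum_congr rfl fun p _ => c22_update_add _ _ _ _ _ _ _ _ _]
        rw [Finset.sum_add_distrib]
        abel
      · intro r a i k x
        simp only [obCochain]
        rw [show (∑ p ∈ Finset.Icc 1 n,
              circ22 (toC2 (μl p) (μr p)) (toC2 (μl (n + 1 - p)) (μr (n + 1 - p))) r
                (Function.update a i (k • x)))
            = ∑ p ∈ Finset.Icc 1 n,
              k • circ22 (toC2 (μl p) (μr p)) (toC2 (μl (n + 1 - p)) (μr (n + 1 - p))) r
                (Function.update a i x) from
          Finset.sum_congr rfl fun p _ => c22_update_smul _ _ _ _ _ _ _ _ _]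
        rw [← Finset.smul_sum, smul_neg]
    have hequ : ∀ (g : G) (r : Fin 3) (a : Fin 3 → A),
        obCochain μl μr n r (fun i => ρ g (a i)) = ρ g (obCochain μl μr n r a) := by
      intro g r a
      simp only [obCochain]
      rw [map_neg, map_sum]
      refine neg_inj.mpr (Finset.sum_congr rfl fun p _ => ?_)
      fin_cases r <;>
        simp [circ22, toC2, map_sub, map_add, hLe, hRe]
    have hcoc : ∀ (r : Fin 4) (a : Fin 4 → A),
        dcob (toC2 (μl 0) (μr 0)) (obCochain μl μr n) r a = 0 :=
      fun r a => ob_is_cocycle μl μr n hdef r a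
    obtain ⟨hl', hr', he1, he2, hd⟩ := H (obCochain μl μr n) hmult hequ hcoc
    refine ⟨-hl', -hr', ?_, ?_, (ext_iff (-hl') (-hr')).mpr ?_⟩
    · intro g x y
      simp [LinearMap.neg_apply, map_neg, he1 g x y]
    · intro g x y
      simp [LinearMap.neg_apply, map_neg, he2 g x y]
    · intro r a
      rw [neg_neg, neg_neg]
      exact hd r a
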